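/- arXiv:1405.5445 — 2 statements merged into one kernel-verified Lean document; each statement's English description precedes it below -/
import Mathlib

section
/- Let T, δ > 0, C > 1 and ε > 0 with arctan(2ε/(1 - 1/C²)) ≤ π/2. If s ∈ ℂ satisfies |s - 1/2 - iT| ≤ δ/C and 0 < 1/2 - Re s ≤ εδ, then ∫_{T-δ}^{T+δ} (1 - 2 Re s)/((Re s - 1/2)² + (t - Im s)²) dt ≥ π. -/
open Real Complex

theorem integral_box_ge_pi (T δ C ε : ℝ) (hT : 0 < T) (hδ : 0 < δ) (hC : 1 < C) (hε : 0 < ε)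
    (hεsmall : Real.arctan (2 * ε / (1 - 1 / C ^ 2)) ≤ Real.pi / 2)
    (s : ℂ) (hs : ‖s - 1/2 - Complex.I * T‖ ≤ δ / C)
    (hre1 : 0 < 1/2 - s.re) (hre2 : 1/2 - s.re ≤ ε * δ) :
    Real.pi ≤ ∫ t in (T - δ)..(T + δ), (1 - 2 * s.re) / ((s.re - 1/2) ^ 2 + (t - s.im) ^ 2) := by
  set σ : ℝ := 1/2 - s.re with hσdef
  have hσ : 0 < σ := hre1
  set m : ℝ := s.im
  -- disc condition
  have hre : (s - 1/2 - Complex.I * T).re = s.re - 1/2 := by simp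
  have him : (s - 1/2 - Complex.I * T).im = m - T := by simp [m]
  have hdisc : σ ^ 2 + (m - T) ^ 2 ≤ (δ / C) ^ 2 := by
    have h1 : ‖s - 1/2 - Complex.I * T‖ ^ 2 ≤ (δ / C) ^ 2 := by
      apply pow_le_pow_left₀ (norm_nonneg _) hs _
    rw [Complex.sq_norm, Complex.normSq_apply, hre, him] at h1
    calc σ ^ 2 + (m - T) ^ 2 = (s.re - 1/2) * (s.re - 1/2) + (m - T) * (m - T) := by ring
      _ ≤ (δ / C) ^ 2 := h1
  have hC0 : 0 < C := lt_trans one_pos hC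
  have hδC : δ / C < δ := by
    rw [div_lt_iff₀ hC0]; nlinarith
  have hmT : |m - T| ≤ δ / C := by
    nlinarith [_root_.sq_abs (m - T), abs_nonneg (m - T), div_pos hδ hC0, sq_nonneg σ, sq_nonneg (|m - T| - δ/C)]
  have hint : ∀ t : ℝ, (1 - 2 * s.re) / ((s.re - 1/2) ^ 2 + (t - s.im) ^ 2)
      = 2 * σ / (σ ^ 2 + (t - m) ^ 2) := by
    intro t; rw [hσdef]; simp only [m]; ring_nf
  simp only [show s.im = m from rfl] at hint; simp only [hint]
  clear_value σ m
  have ha : 0 < T + δ - m := by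
    have := abs_le.mp hmT; cases this; linarith
  have hb : 0 < m - (T - δ) := by
    have := abs_le.mp hmT; cases this; linarith
  have hab : σ ^ 2 ≤ (T + δ - m) * (m - (T - δ)) := by
    have h2 : (δ / C) ^ 2 < δ ^ 2 := by nlinarith [div_pos hδ hC0]
    have expand : (T + δ - m) * (m - (T - δ)) = δ ^ 2 - (m - T) ^ 2 := by ring
    linarith
  have hderiv : ∀ t : ℝ, HasDerivAt (fun u : ℝ => 2 * Real.arctan ((u - m) / σ))
      (2 * σ / (σ ^ 2 + (t - m) ^ 2)) t := by
    intro t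
    have h1 : HasDerivAt (fun u : ℝ => (u - m) / σ) (1 / σ) t := by
      simpa using ((hasDerivAt_id t).sub_const m).div_const σ
    have h2 := ((Real.hasDerivAt_arctan ((t - m) / σ)).comp t h1).const_mul 2
    refine h2.congr_deriv ?_
    field_simp
  have hcont : Continuous fun t : ℝ => 2 * σ / (σ ^ 2 + (t - m) ^ 2) := by
    apply Continuous.div (by continuity) (by continuity)
    intro t; positivity
  have hcalc := intervalIntegral.integral_eq_sub_of_hasDerivAt
    (a := T - δ) (b := T + δ) (f := fun u : ℝ => 2 * Real.arctan ((u - m) / σ))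
    (fun t _ => hderiv t) (hcont.intervalIntegrable _ _)
  rw [hcalc]
  show Real.pi ≤ 2 * Real.arctan ((T + δ - m) / σ) - 2 * Real.arctan ((T - δ - m) / σ)
  have hbb : (T - δ - m) / σ = -((m - (T - δ)) / σ) := by ring
  rw [hbb, Real.arctan_neg]
  have hax : 0 < (T + δ - m) / σ := div_pos ha hσ
  have h3 := Real.arctan_inv_of_pos hax
  have hinv : ((T + δ - m) / σ)⁻¹ = σ / (T + δ - m) := by
    rw [inv_div]
  rw [hinv] at h3
  have h4 : Real.arctan (σ / (T + δ - m)) ≤ Real.arctan ((m - (T - δ)) / σ) := by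
    apply Real.arctan_strictMono.monotone
    rw [div_le_div_iff₀ ha hσ]
    calc σ * σ = σ ^ 2 := by ring
      _ ≤ (T + δ - m) * (m - (T - δ)) := hab
      _ = (m - (T - δ)) * (T + δ - m) := by ring
  linarith
end

section
/- Let n : ℕ → ℝ be a non-decreasing nonnegative function such that the series ∑_{k=1}^∞ n(k) (1/k^{3/2} - 1/(k+1)^{3/2}) converges. Then n(k) = o(k^{3/2}) as k → ∞. -/
open Real Filter

private lemma g_tendsto : Filter.Tendsto (fun k : ℕ => 1 / (k : ℝ) ^ ((3:ℝ)/2))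
    Filter.atTop (nhds 0) := by
  apply Filter.Tendsto.comp (g := fun x : ℝ => 1 / x ^ ((3:ℝ)/2))
  · simpa [Pi.inv_def] using (tendsto_rpow_atTop (by norm_num : (0:ℝ) < 3/2)).inv_tendsto_atTop
  · exact tendsto_natCast_atTop_atTop

private lemma diff_nonneg (j : ℕ) (hj : 1 ≤ j) :
    0 ≤ 1 / (j : ℝ) ^ ((3:ℝ)/2) - 1 / ((j : ℝ) + 1) ^ ((3:ℝ)/2) := by
  have h0 : (0:ℝ) < (j : ℝ) := by exact_mod_cast hj
  have hpow : (j : ℝ) ^ ((3:ℝ)/2) ≤ ((j : ℝ) + 1) ^ ((3:ℝ)/2) :=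
    Real.rpow_le_rpow h0.le (by linarith) (by norm_num)
  have h2 : 1 / ((j : ℝ) + 1) ^ ((3:ℝ)/2) ≤ 1 / (j : ℝ) ^ ((3:ℝ)/2) :=
    one_div_le_one_div_of_le (Real.rpow_pos_of_pos h0 _) hpow
  linarith

private lemma telescope (m : ℕ) (hm : 1 ≤ m) :
    HasSum (fun k : ℕ => 1 / ((k + m : ℕ) : ℝ) ^ ((3:ℝ)/2)
      - 1 / ((k + m + 1 : ℕ) : ℝ) ^ ((3:ℝ)/2)) (1 / (m : ℝ) ^ ((3:ℝ)/2)) := by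
  set g : ℕ → ℝ := fun j => 1 / (j : ℝ) ^ ((3:ℝ)/2) with hg
  have hnonneg : ∀ k : ℕ, 0 ≤ g (k + m) - g (k + m + 1) := by
    intro k
    have := diff_nonneg (k + m) (le_trans hm (Nat.le_add_left m k))
    simpa [hg, Nat.cast_add, Nat.cast_one] using this
  rw [hasSum_iff_tendsto_nat_of_nonneg hnonneg]
  have key : ∀ N : ℕ, ∑ k ∈ Finset.range N, (g (k + m) - g (k + m + 1)) = g m - g (N + m) := by
    intro N
    induction N with
    | zero => simp
    | succ N ih => rw [Finset.sum_range_succ, ih]; ring_nf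
  simp only [key]
  have : Filter.Tendsto (fun N : ℕ => g (N + m)) atTop (nhds 0) :=
    g_tendsto.comp (tendsto_add_atTop_nat m)
  have := (tendsto_const_nhds (x := g m)).sub this
  simpa [hg, one_div] using this

theorem counting_little_o (n : ℕ → ℝ) (hmono : Monotone n) (hnonneg : ∀ k, 0 ≤ n k)
    (hsum : Summable (fun k : ℕ =>
      n k * (1 / (k : ℝ) ^ ((3:ℝ)/2) - 1 / ((k : ℝ) + 1) ^ ((3:ℝ)/2)))) :
    Filter.Tendsto (fun k : ℕ => n k / (k : ℝ) ^ ((3:ℝ)/2)) Filter.atTop (nhds 0) := by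
  set a : ℕ → ℝ := fun k => n k * (1 / (k : ℝ) ^ ((3:ℝ)/2) - 1 / ((k : ℝ) + 1) ^ ((3:ℝ)/2))
  have hT : Filter.Tendsto (fun m : ℕ => ∑' k, a (k + m)) atTop (nhds 0) :=
    tendsto_sum_nat_add a
  have hbound : ∀ m : ℕ, 1 ≤ m → n m / (m : ℝ) ^ ((3:ℝ)/2) ≤ ∑' k, a (k + m) := by
    intro m hm
    have htel := telescope m hm
    have hsum' : Summable (fun k => a (k + m)) := (summable_nat_add_iff m).2 hsum
    have hle : ∀ k : ℕ, n m * (1 / ((k + m : ℕ) : ℝ) ^ ((3:ℝ)/2)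
        - 1 / ((k + m + 1 : ℕ) : ℝ) ^ ((3:ℝ)/2)) ≤ a (k + m) := by
      intro k
      have hd : (0:ℝ) ≤ 1 / ((k + m : ℕ) : ℝ) ^ ((3:ℝ)/2)
          - 1 / ((k + m + 1 : ℕ) : ℝ) ^ ((3:ℝ)/2) := by
        have := diff_nonneg (k + m) (le_trans hm (Nat.le_add_left m k))
        push_cast at this ⊢; linarith
      have := mul_le_mul_of_nonneg_right (hmono (Nat.le_add_left m k)) hd
      simpa [a, Nat.cast_add, Nat.cast_one] using this
    calc n m / (m : ℝ) ^ ((3:ℝ)/2) = n m * (1 / (m : ℝ) ^ ((3:ℝ)/2)) := by ring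
      _ = ∑' k, n m * (1 / ((k + m : ℕ) : ℝ) ^ ((3:ℝ)/2)
            - 1 / ((k + m + 1 : ℕ) : ℝ) ^ ((3:ℝ)/2)) := (htel.mul_left (n m)).tsum_eq.symm
      _ ≤ ∑' k, a (k + m) := (htel.mul_left (n m)).summable.tsum_le_tsum hle hsum'
  refine squeeze_zero' ?_ ?_ hT
  · filter_upwards with m
    exact div_nonneg (hnonneg m) (Real.rpow_nonneg (Nat.cast_nonneg m) _)
  · filter_upwards [eventually_ge_atTop 1] with m hm using hbound m hm
end
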